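/- Let θ ∈ (0, π/2) and λ ≥ 2. Let N*_δ = (X_δ, Y_δ) denote a random vector with the selected-step density p*_δ, and let V(δ) = exp(αδ). Then for all sufficiently small α > 0, limsup_{δ→+∞} E[exp(−α·(X_δ cos θ + Y_δ sin θ))] < 1. -/

import Mathlib

open MeasureTheory ProbabilityTheory Real Set Filter
open scoped Topology

noncomputable def phi (x : ℝ) : ℝ := Real.exp (-x^2/2) / Real.sqrt (2*Real.pi)
noncomputable def Phi (x : ℝ) : ℝ := ∫ u in Set.Iic x, phi u
noncomputable def pdelta (θ δ : ℝ) (z : ℝ × ℝ) : ℝ :=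
  phi z.1 * phi z.2 * Set.indicator (Set.Ici (0:ℝ)) (fun _ => 1)
    (δ - z.1 * Real.cos θ - z.2 * Real.sin θ) / Phi δ
noncomputable def p1 (θ δ x : ℝ) : ℝ :=
  phi x * Phi ((δ - x * Real.cos θ) / Real.sin θ) / Phi δ
noncomputable def F1 (θ δ x : ℝ) : ℝ := ∫ u in Set.Iic x, p1 θ δ u
noncomputable def pstar (lam : ℕ) (θ δ : ℝ) (z : ℝ × ℝ) : ℝ :=
  (lam : ℝ) * pdelta θ δ z * F1 θ δ z.1 ^ (lam - 1)
noncomputable def p1star (lam : ℕ) (θ δ x : ℝ) : ℝ :=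
  (lam : ℝ) * p1 θ δ x * F1 θ δ x ^ (lam - 1)
noncomputable def p2star (lam : ℕ) (θ δ y : ℝ) : ℝ :=
  (lam : ℝ) * (phi y / Phi δ) *
    ∫ u in Set.Iic ((δ - y * Real.sin θ) / Real.cos θ), phi u * F1 θ δ u ^ (lam - 1)


lemma phi_eq : phi = fun x => Real.exp (-(1/2) * x^2) * (Real.sqrt (2*Real.pi))⁻¹ := by
  funext x
  rw [phi, div_eq_mul_inv, show -x^2/2 = -(1/2) * x^2 by ring]

lemma phi_pos (x : ℝ) : 0 < phi x :=
  div_pos (Real.exp_pos _) (Real.sqrt_pos.2 (by positivity))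

lemma phi_nonneg (x : ℝ) : 0 ≤ phi x := (phi_pos x).le

lemma phi_continuous : Continuous phi := by
  unfold phi; fun_prop

lemma integrable_phi : Integrable phi := by
  rw [phi_eq]
  exact (integrable_exp_neg_mul_sq (by norm_num)).mul_const _

lemma integral_phi : ∫ x, phi x = 1 := by
  rw [phi_eq, integral_mul_const, integral_gaussian,
    show Real.pi / (1/2) = 2 * Real.pi by ring, mul_inv_cancel₀ (by positivity)]

lemma phi_neg (x : ℝ) : phi (-x) = phi x := by simp [phi]

lemma integrableOn_phi (s : Set ℝ) : IntegrableOn phi s := integrable_phi.integrableOn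

lemma Phi_mono : Monotone Phi := fun a b hab => by
  apply setIntegral_mono_set (integrableOn_phi _)
    (Filter.Eventually.of_forall (fun x => phi_nonneg x))
  exact (Iic_subset_Iic.2 hab).eventuallyLE

lemma Phi_nonneg (x : ℝ) : 0 ≤ Phi x :=
  setIntegral_nonneg measurableSet_Iic (fun u _ => phi_nonneg u)

lemma Phi_le_one (x : ℝ) : Phi x ≤ 1 := by
  rw [← integral_phi]
  exact setIntegral_le_integral integrable_phi (Filter.Eventually.of_forall phi_nonneg)

lemma Phi_pos (x : ℝ) : 0 < Phi x := by
  rw [Phi, setIntegral_pos_iff_support_of_nonneg_ae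
    (Filter.Eventually.of_forall phi_nonneg) (integrableOn_phi _)]
  have : Function.support phi = Set.univ := by
    ext u; simp [Function.support, (phi_pos u).ne']
  rw [this, Set.univ_inter]
  simp [Real.volume_Iic]

lemma Phi_tendsto_one : Tendsto Phi atTop (𝓝 1) := by
  rw [← integral_phi]
  exact MeasureTheory.AECover.integral_tendsto_of_countably_generated
    (aecover_Iic tendsto_id) integrable_phi

lemma Phi_eq_indicator (b : ℝ) : Phi b = ∫ x, Set.indicator (Iic b) phi x := by
  rw [Phi, integral_indicator measurableSet_Iic]

lemma Phi_tendsto_zero : Tendsto Phi atBot (𝓝 0) := by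
  have h0 : (0:ℝ) = ∫ _ : ℝ, (0:ℝ) := by simp
  simp only [funext Phi_eq_indicator]
  rw [show (𝓝 (0:ℝ)) = 𝓝 (∫ _ : ℝ, (0:ℝ)) by simp]
  apply tendsto_integral_filter_of_dominated_convergence phi
  · exact Filter.Eventually.of_forall fun b =>
      (phi_continuous.aestronglyMeasurable).indicator measurableSet_Iic
  · refine Filter.Eventually.of_forall fun b => Filter.Eventually.of_forall fun x => ?_
    rw [Real.norm_eq_abs, abs_of_nonneg (Set.indicator_nonneg (fun u _ => phi_nonneg u) x)]
    exact Set.indicator_le_self' (fun u _ => phi_nonneg u) x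
  · exact integrable_phi
  · refine Filter.Eventually.of_forall fun x => ?_
    have : ∀ᶠ b in atBot, Set.indicator (Iic b) phi x = 0 := by
      filter_upwards [eventually_lt_atBot x] with b hb
      exact Set.indicator_of_notMem (by simp [Set.mem_Iic]; linarith) _
    exact Tendsto.congr' (this.mono fun b hb => hb.symm) tendsto_const_nhds

lemma hasDerivAt_Phi (x : ℝ) : HasDerivAt Phi (phi x) x := by
  have key : HasDerivAt (fun u => ∫ t in (0:ℝ)..u, phi t) (phi x) x :=
    intervalIntegral.integral_hasDerivAt_right
      (integrable_phi.intervalIntegrable)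
      (phi_continuous.stronglyMeasurableAtFilter _ _)
      phi_continuous.continuousAt
  have : Phi = fun u => (∫ t in (0:ℝ)..u, phi t) + Phi 0 := by
    funext u
    rw [← intervalIntegral.integral_Iic_sub_Iic (integrableOn_phi _) (integrableOn_phi _)]
    show Phi u = Phi u - Phi 0 + Phi 0
    ring
  rw [this]
  simpa using key.add_const (Phi 0)

lemma Phi_continuous : Continuous Phi :=
  continuous_iff_continuousAt.2 fun x => (hasDerivAt_Phi x).continuousAt

lemma Phi_neg_eq (x : ℝ) : Phi (-x) = 1 - Phi x := by
  have h1 : Phi (-x) = ∫ u in Ioi x, phi u := by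
    rw [Phi, ← integral_comp_neg_Ioi]
    simp only [phi_neg]
  rw [h1, eq_sub_iff_add_eq, add_comm, ← integral_phi]
  exact intervalIntegral.integral_Iic_add_Ioi (integrableOn_phi _) (integrableOn_phi _)

lemma Phi_zero : Phi 0 = 1/2 := by
  have := Phi_neg_eq 0
  rw [neg_zero] at this
  linarith

lemma integrable_exp_abs_mul_phi (b : ℝ) :
    Integrable (fun x => Real.exp (b * |x|) * phi x) := by
  have hg : Integrable (fun x : ℝ => Real.exp (b^2) *
      (Real.exp (-(1/4) * x^2) * (Real.sqrt (2*Real.pi))⁻¹)) :=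
    (((integrable_exp_neg_mul_sq (by norm_num : (0:ℝ) < 1/4)).mul_const _).const_mul _)
  apply hg.mono'
  · exact ((Real.continuous_exp.comp (continuous_const.mul continuous_abs)).mul
      phi_continuous).aestronglyMeasurable
  · refine Filter.Eventually.of_forall fun x => ?_
    rw [Real.norm_eq_abs, abs_of_nonneg (mul_nonneg (Real.exp_pos _).le (phi_nonneg x))]
    rw [phi, div_eq_mul_inv, ← mul_assoc, ← Real.exp_add,
      show Real.exp (b^2) * (Real.exp (-(1/4) * x^2) * (Real.sqrt (2*Real.pi))⁻¹)
        = Real.exp (-(1/4) * x^2 + b^2) * (Real.sqrt (2*Real.pi))⁻¹ by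
          rw [Real.exp_add]; ring]
    apply mul_le_mul_of_nonneg_right _ (by positivity)
    apply Real.exp_le_exp.2
    nlinarith [sq_nonneg (|x|/2 - b), sq_abs x]

lemma abs_le_exp_abs (x : ℝ) : |x| ≤ Real.exp |x| := by
  have := Real.add_one_le_exp |x|; linarith

lemma integrable_abs_mul_exp_abs_mul_phi (b : ℝ) :
    Integrable (fun x => |x| * Real.exp (b * |x|) * phi x) := by
  apply (integrable_exp_abs_mul_phi (b+1)).mono'
  · exact ((continuous_abs.mul (Real.continuous_exp.comp (continuous_const.mul continuous_abs))).mul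
      phi_continuous).aestronglyMeasurable
  · refine Filter.Eventually.of_forall fun x => ?_
    rw [Real.norm_eq_abs, abs_of_nonneg (mul_nonneg
      (mul_nonneg (abs_nonneg x) (Real.exp_pos _).le) (phi_nonneg x))]
    have h1 : |x| * Real.exp (b * |x|) ≤ Real.exp ((b+1) * |x|) := by
      calc |x| * Real.exp (b * |x|) ≤ Real.exp |x| * Real.exp (b * |x|) :=
            mul_le_mul_of_nonneg_right (abs_le_exp_abs x) (Real.exp_pos _).le
        _ = Real.exp ((b+1) * |x|) := by rw [← Real.exp_add]; ring_nf
    exact mul_le_mul_of_nonneg_right h1 (phi_nonneg x)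

section Theta
variable {θ : ℝ} (hs : 0 < Real.sin θ) (hc : 0 < Real.cos θ)

lemma p1_nonneg (δ u : ℝ) : 0 ≤ p1 θ δ u :=
  div_nonneg (mul_nonneg (phi_nonneg _) (Phi_nonneg _)) (Phi_nonneg _)

lemma p1_le (δ u : ℝ) : p1 θ δ u ≤ phi u / Phi δ := by
  rw [p1, div_le_div_iff_of_pos_right (Phi_pos δ)]
  exact mul_le_of_le_one_right (phi_nonneg u) (Phi_le_one _)

lemma p1_continuous (δ : ℝ) : Continuous (p1 θ δ) := by
  unfold p1
  exact ((phi_continuous.mul (Phi_continuous.comp (by fun_prop))).div_const _)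

lemma integrable_p1 (δ : ℝ) : Integrable (p1 θ δ) := by
  apply (integrable_phi.div_const (Phi δ)).mono'
    (p1_continuous δ).aestronglyMeasurable
  exact Filter.Eventually.of_forall fun u => by
    rw [Real.norm_eq_abs, abs_of_nonneg (p1_nonneg δ u)]; exact p1_le δ u

lemma F1_nonneg (δ x : ℝ) : 0 ≤ F1 θ δ x :=
  setIntegral_nonneg measurableSet_Iic fun u _ => p1_nonneg δ u

lemma F1_mono (δ : ℝ) : Monotone (F1 θ δ) := fun a b hab => by
  apply setIntegral_mono_set (integrable_p1 δ).integrableOn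
    (Filter.Eventually.of_forall (p1_nonneg δ))
  exact (Iic_subset_Iic.2 hab).eventuallyLE

lemma F1_le (δ x : ℝ) : F1 θ δ x ≤ Phi x / Phi δ := by
  rw [F1, Phi, ← integral_div]
  exact setIntegral_mono_on (integrable_p1 δ).integrableOn
    ((integrable_phi.div_const _).integrableOn) measurableSet_Iic
    fun u _ => p1_le δ u

lemma F1_le' {δ x : ℝ} (hδ : 1/2 ≤ Phi δ) : F1 θ δ x ≤ 2 := by
  refine (F1_le δ x).trans ?_
  rw [div_le_iff₀ (Phi_pos δ)]
  calc Phi x ≤ 1 := Phi_le_one x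
    _ ≤ 2 * Phi δ := by linarith

include hs in
lemma F1_tendsto (x : ℝ) : Tendsto (fun δ => F1 θ δ x) atTop (𝓝 (Phi x)) := by
  have heq : ∀ δ, F1 θ δ x
      = (∫ u in Iic x, phi u * Phi ((δ - u * Real.cos θ) / Real.sin θ)) / Phi δ := by
    intro δ
    rw [F1, ← integral_div]
    rfl
  simp only [heq]
  have hnum : Tendsto (fun δ => ∫ u in Iic x, phi u * Phi ((δ - u * Real.cos θ) / Real.sin θ))
      atTop (𝓝 (Phi x)) := by
    rw [Phi]
    apply tendsto_integral_filter_of_dominated_convergence phi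
    · exact Filter.Eventually.of_forall fun δ =>
        (phi_continuous.mul (Phi_continuous.comp (by fun_prop))).aestronglyMeasurable.restrict
    · refine Filter.Eventually.of_forall fun δ => Filter.Eventually.of_forall fun u => ?_
      rw [Real.norm_eq_abs, abs_of_nonneg (mul_nonneg (phi_nonneg _) (Phi_nonneg _))]
      exact mul_le_of_le_one_right (phi_nonneg u) (Phi_le_one _)
    · exact integrable_phi.integrableOn
    · refine Filter.Eventually.of_forall fun u => ?_
      have harg : Tendsto (fun δ => (δ - u * Real.cos θ) / Real.sin θ) atTop atTop :=
        (tendsto_atTop_add_const_right atTop _ tendsto_id).atTop_div_const hs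
      have := (Phi_tendsto_one.comp harg).const_mul (phi u)
      simpa [mul_one] using this
  have := hnum.div (Phi_tendsto_one) one_ne_zero
  rw [div_one] at this; exact this

end Theta

section Lam
variable {lam : ℕ} (hlam : 2 ≤ lam)

lemma q_nonneg (k : ℕ) (x : ℝ) : 0 ≤ phi x * Phi x ^ k :=
  mul_nonneg (phi_nonneg x) (pow_nonneg (Phi_nonneg x) k)

lemma q_le_phi (k : ℕ) (x : ℝ) : phi x * Phi x ^ k ≤ phi x :=
  mul_le_of_le_one_right (phi_nonneg x)
    (pow_le_one₀ (Phi_nonneg x) (Phi_le_one x))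

lemma q_continuous (k : ℕ) : Continuous (fun x => phi x * Phi x ^ k) :=
  phi_continuous.mul (Phi_continuous.pow k)

lemma integrable_q (k : ℕ) : Integrable (fun x => phi x * Phi x ^ k) := by
  apply integrable_phi.mono' (q_continuous k).aestronglyMeasurable
  exact Filter.Eventually.of_forall fun x => by
    rw [Real.norm_eq_abs, abs_of_nonneg (q_nonneg k x)]; exact q_le_phi k x

lemma integrable_abs_q (k : ℕ) : Integrable (fun x => x * (phi x * Phi x ^ k)) := by
  have h0 : Integrable (fun x => |x| * Real.exp (0 * |x|) * phi x) :=
    integrable_abs_mul_exp_abs_mul_phi 0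
  simp only [zero_mul, Real.exp_zero, mul_one] at h0
  apply h0.mono' ((continuous_id.mul (q_continuous k)).aestronglyMeasurable)
  refine Filter.Eventually.of_forall fun x => ?_
  rw [Real.norm_eq_abs, Pi.mul_apply, abs_mul, abs_of_nonneg (q_nonneg k x)]
  exact mul_le_mul_of_nonneg_left (q_le_phi k x) (abs_nonneg x)

include hlam in
lemma integral_lam_q : ∫ x, (lam:ℝ) * (phi x * Phi x ^ (lam - 1)) = 1 := by
  have hderiv : ∀ x : ℝ, HasDerivAt (fun u => Phi u ^ lam)
      ((lam:ℝ) * (phi x * Phi x ^ (lam - 1))) x := by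
    intro x
    have := (hasDerivAt_Phi x).fun_pow lam
    refine this.congr_deriv ?_
    ring
  have hint : Integrable (fun x => (lam:ℝ) * (phi x * Phi x ^ (lam - 1))) :=
    (integrable_q _).const_mul _
  have hbot : Tendsto (fun x => Phi x ^ lam) atBot (𝓝 0) := by
    have := Phi_tendsto_zero.pow (n := lam)
    simpa [zero_pow (by omega : lam ≠ 0)] using this
  have htop : Tendsto (fun x => Phi x ^ lam) atTop (𝓝 1) := by
    have := Phi_tendsto_one.pow (n := lam)
    simpa using this
  have := MeasureTheory.integral_of_hasDerivAt_of_tendsto hderiv hint hbot htop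
  simpa using this

lemma integral_y_phi : ∫ y, y * phi y = 0 := by
  have hint : Integrable (fun y => y * phi y) := by
    have h0 : Integrable (fun x => |x| * Real.exp (0 * |x|) * phi x) :=
      integrable_abs_mul_exp_abs_mul_phi 0
    simp only [zero_mul, Real.exp_zero, mul_one] at h0
    apply h0.mono' ((continuous_id.mul phi_continuous).aestronglyMeasurable)
    exact Filter.Eventually.of_forall fun x => by
      rw [Real.norm_eq_abs, Pi.mul_apply, abs_mul, abs_of_nonneg (phi_nonneg x)]
      simp [id]
  have h : ∫ y, y * phi y = ∫ y, (-y) * phi (-y) := by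
    rw [MeasureTheory.integral_neg_eq_self (fun y => y * phi y)]
  simp only [phi_neg, neg_mul] at h
  rw [MeasureTheory.integral_neg] at h
  linarith

lemma Phi_strictMono : StrictMono Phi := by
  apply strictMono_of_deriv_pos
  intro x
  rw [(hasDerivAt_Phi x).deriv]
  exact phi_pos x

include hlam in
lemma M_pos : 0 < ∫ x, x * (phi x * Phi x ^ (lam - 1)) := by
  set k := lam - 1 with hk
  have hk1 : 1 ≤ k := by omega
  set h : ℝ → ℝ := fun x => x * (phi x * Phi x ^ k) with hh
  have hint : Integrable h := integrable_abs_q k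
  have hsplit : (∫ x, h x) = (∫ x in Iic 0, h x) + ∫ x in Ioi 0, h x :=
    (intervalIntegral.integral_Iic_add_Ioi hint.integrableOn hint.integrableOn).symm
  have hneg : (∫ x in Iic 0, h x) = ∫ x in Ioi 0, h (-x) := by
    have := integral_comp_neg_Ioi 0 h
    rw [neg_zero] at this
    exact this.symm
  have hcombine : (∫ x in Ioi 0, (h x + h (-x))) = ∫ x, h x := by
    rw [MeasureTheory.integral_add hint.integrableOn hint.comp_neg.integrableOn,
      hsplit, hneg, add_comm]
  rw [← hcombine]
  have hform : ∀ x : ℝ, h x + h (-x) = x * phi x * (Phi x ^ k - (1 - Phi x) ^ k) := by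
    intro x
    simp only [hh, phi_neg, Phi_neg_eq]
    ring
  have hnonneg : ∀ x ∈ Ioi (0:ℝ), 0 < h x + h (-x) := by
    intro x hx
    rw [hform]
    have h1 : (1/2 : ℝ) < Phi x := by
      rw [← Phi_zero]; exact Phi_strictMono hx
    have h2 : (1 - Phi x) ^ k < Phi x ^ k := by
      apply pow_lt_pow_left₀ _ (by linarith [Phi_le_one x]) (by omega)
      linarith
    exact mul_pos (mul_pos hx (phi_pos x)) (by linarith)
  have hintOn : IntegrableOn (fun x => h x + h (-x)) (Ioi 0) :=
    hint.integrableOn.add hint.comp_neg.integrableOn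
  rw [setIntegral_pos_iff_support_of_nonneg_ae
    ((ae_restrict_iff' measurableSet_Ioi).2
      (Filter.Eventually.of_forall fun x hx => (hnonneg x hx).le)) hintOn]
  have hsub : Ioi (0:ℝ) ⊆ Function.support (fun x => h x + h (-x)) ∩ Ioi 0 :=
    fun x hx => ⟨(hnonneg x hx).ne', hx⟩
  calc (0:ENNReal) < volume (Ioi (0:ℝ)) := by simp [Real.volume_Ioi]
    _ ≤ _ := measure_mono hsub

end Lam

section G
variable (lam : ℕ) (θ : ℝ)

noncomputable def Cfun (z : ℝ × ℝ) : ℝ :=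
  (lam:ℝ) * (phi z.1 * phi z.2 * Phi z.1 ^ (lam - 1))

noncomputable def gfun (α : ℝ) : ℝ :=
  ∫ z : ℝ × ℝ, Real.exp (-α * (z.1 * Real.cos θ + z.2 * Real.sin θ)) * Cfun lam z

lemma Cfun_nonneg (z : ℝ × ℝ) : 0 ≤ Cfun lam z := by
  unfold Cfun
  have := phi_nonneg z.1; have := phi_nonneg z.2; have := Phi_nonneg z.1
  positivity

lemma Cfun_le (z : ℝ × ℝ) : Cfun lam z ≤ (lam:ℝ) * (phi z.1 * phi z.2) := by
  unfold Cfun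
  apply mul_le_mul_of_nonneg_left _ (Nat.cast_nonneg lam)
  exact mul_le_of_le_one_right (mul_nonneg (phi_nonneg _) (phi_nonneg _))
    (pow_le_one₀ (Phi_nonneg _) (Phi_le_one _))

lemma Cfun_continuous : Continuous (Cfun lam) := by
  unfold Cfun
  exact continuous_const.mul
    (((phi_continuous.comp continuous_fst).mul (phi_continuous.comp continuous_snd)).mul
      ((Phi_continuous.comp continuous_fst).pow _))

lemma integrable_Cfun : Integrable (Cfun lam) := by
  have h := (((integrable_q (lam-1)).const_mul (lam:ℝ)).mul_prod integrable_phi)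
  rw [← Measure.volume_eq_prod] at h
  apply h.congr
  refine Filter.Eventually.of_forall fun z => ?_
  unfold Cfun
  ring

lemma integrable_mul_fst_Cfun : Integrable (fun z : ℝ × ℝ => z.1 * Cfun lam z) := by
  have h := ((integrable_abs_q (lam-1)).const_mul (lam:ℝ)).mul_prod integrable_phi
  rw [← Measure.volume_eq_prod] at h
  apply h.congr
  refine Filter.Eventually.of_forall fun z => ?_
  unfold Cfun
  ring

lemma integrable_mul_snd_Cfun : Integrable (fun z : ℝ × ℝ => z.2 * Cfun lam z) := by
  have hy : Integrable (fun y : ℝ => y * phi y) := by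
    have h0 := integrable_abs_mul_exp_abs_mul_phi 0
    simp only [zero_mul, Real.exp_zero, mul_one] at h0
    apply h0.mono' ((continuous_id.mul phi_continuous).aestronglyMeasurable)
    exact Filter.Eventually.of_forall fun x => by
      rw [Real.norm_eq_abs, Pi.mul_apply, abs_mul, abs_of_nonneg (phi_nonneg x)]
      simp [id]
  have h := (((integrable_q (lam-1)).const_mul (lam:ℝ)).mul_prod hy)
  rw [← Measure.volume_eq_prod] at h
  apply h.congr
  refine Filter.Eventually.of_forall fun z => ?_
  unfold Cfun
  ring

lemma gfun_zero (hlam : 2 ≤ lam) : gfun lam θ 0 = 1 := by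
  unfold gfun
  have h1 : ∀ z : ℝ × ℝ, Real.exp (-0 * (z.1 * Real.cos θ + z.2 * Real.sin θ)) * Cfun lam z
      = ((lam:ℝ) * (phi z.1 * Phi z.1 ^ (lam - 1))) * phi z.2 := by
    intro z
    simp only [neg_zero, zero_mul, Real.exp_zero, one_mul]
    unfold Cfun
    ring
  rw [integral_congr_ae (Filter.Eventually.of_forall h1), Measure.volume_eq_prod,
    integral_prod_mul (f := fun x => (lam:ℝ) * (phi x * Phi x ^ (lam - 1))) (g := phi),
    integral_lam_q hlam, integral_phi, one_mul]

end G

section Deriv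
variable {lam : ℕ} {θ : ℝ}

lemma integrable_bound2 : Integrable (fun z : ℝ × ℝ =>
    (lam:ℝ) * (Real.exp (2*|z.1|) * phi z.1 * (Real.exp (2*|z.2|) * phi z.2))) := by
  have h2 : Integrable (fun x : ℝ => Real.exp (2*|x|) * phi x) := integrable_exp_abs_mul_phi 2
  have h := (h2.mul_prod h2).const_mul (lam:ℝ)
  rw [← Measure.volume_eq_prod] at h
  exact h

lemma hasDerivAt_gfun (hlam : 2 ≤ lam) (hs : 0 < Real.sin θ) (hs1 : Real.sin θ ≤ 1)
    (hc : 0 < Real.cos θ) (hc1 : Real.cos θ ≤ 1) :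
    HasDerivAt (gfun lam θ)
      (-(Real.cos θ * ((lam:ℝ) * ∫ x, x * (phi x * Phi x ^ (lam - 1))))) 0 := by
  set c := Real.cos θ
  set s := Real.sin θ
  set t : ℝ × ℝ → ℝ := fun z => z.1 * c + z.2 * s with ht
  set F : ℝ → ℝ × ℝ → ℝ := fun α z => Real.exp (-α * t z) * Cfun lam z with hF
  set F' : ℝ → ℝ × ℝ → ℝ := fun α z => -(t z) * Real.exp (-α * t z) * Cfun lam z with hF'
  set bound : ℝ × ℝ → ℝ := fun z =>
    (lam:ℝ) * (Real.exp (2*|z.1|) * phi z.1 * (Real.exp (2*|z.2|) * phi z.2)) with hbound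
  have ht_cont : Continuous t := by fun_prop
  have hF_meas : ∀ᶠ α in 𝓝 (0:ℝ), AEStronglyMeasurable (F α) (volume : Measure (ℝ × ℝ)) :=
    Filter.Eventually.of_forall fun α =>
      ((Real.continuous_exp.comp (continuous_const.mul ht_cont)).mul
        (Cfun_continuous lam)).aestronglyMeasurable
  have hF_int : Integrable (F 0) := by
    apply (integrable_Cfun lam).congr
    refine Filter.Eventually.of_forall fun z => ?_
    simp [hF]
  have hF'_meas : AEStronglyMeasurable (F' 0) (volume : Measure (ℝ × ℝ)) :=
    (((ht_cont.neg).mul (Real.continuous_exp.comp (continuous_const.mul ht_cont))).mul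
      (Cfun_continuous lam)).aestronglyMeasurable
  have habs_t : ∀ z : ℝ × ℝ, |t z| ≤ |z.1| + |z.2| := by
    intro z
    calc |t z| ≤ |z.1 * c| + |z.2 * s| := abs_add_le _ _
      _ = |z.1| * |c| + |z.2| * |s| := by rw [abs_mul, abs_mul]
      _ ≤ |z.1| * 1 + |z.2| * 1 := by
          gcongr
          · rw [abs_of_nonneg hc.le]; exact hc1
          · rw [abs_of_nonneg hs.le]; exact hs1
      _ = |z.1| + |z.2| := by ring
  have h_bound : ∀ᵐ z : ℝ × ℝ, ∀ α ∈ Metric.ball (0:ℝ) 1, ‖F' α z‖ ≤ bound z := by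
    refine Filter.Eventually.of_forall fun z => fun α hα => ?_
    have hα1 : |α| ≤ 1 := by
      rw [Metric.mem_ball, Real.dist_eq, sub_zero] at hα
      exact hα.le
    have hexp : Real.exp (-α * t z) ≤ Real.exp (|z.1| + |z.2|) := by
      apply Real.exp_le_exp.2
      calc -α * t z ≤ |(-α) * t z| := le_abs_self _
        _ = |α| * |t z| := by rw [abs_mul, abs_neg]
        _ ≤ 1 * (|z.1| + |z.2|) := by
            apply mul_le_mul hα1 (habs_t z) (abs_nonneg _) zero_le_one
        _ = |z.1| + |z.2| := one_mul _
    have hsum_exp : |z.1| + |z.2| ≤ Real.exp (|z.1| + |z.2|) := by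
      have := Real.add_one_le_exp (|z.1| + |z.2|); linarith
    have hnorm : ‖F' α z‖ = |t z| * Real.exp (-α * t z) * Cfun lam z := by
      rw [hF', Real.norm_eq_abs, abs_mul, abs_mul, abs_neg,
        abs_of_nonneg (Real.exp_pos _).le, abs_of_nonneg (Cfun_nonneg lam z)]
    rw [hnorm, hbound]
    calc |t z| * Real.exp (-α * t z) * Cfun lam z
        ≤ (|z.1| + |z.2|) * Real.exp (|z.1| + |z.2|) * ((lam:ℝ) * (phi z.1 * phi z.2)) :=
          mul_le_mul
            (mul_le_mul (habs_t z) hexp (Real.exp_pos _).le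
              (add_nonneg (abs_nonneg _) (abs_nonneg _)))
            (Cfun_le lam z) (Cfun_nonneg lam z)
            (mul_nonneg (add_nonneg (abs_nonneg _) (abs_nonneg _)) (Real.exp_pos _).le)
      _ ≤ Real.exp (|z.1| + |z.2|) * Real.exp (|z.1| + |z.2|) * ((lam:ℝ) * (phi z.1 * phi z.2)) := by
          apply mul_le_mul_of_nonneg_right
            (mul_le_mul_of_nonneg_right hsum_exp (Real.exp_pos _).le)
          exact mul_nonneg (Nat.cast_nonneg _) (mul_nonneg (phi_nonneg _) (phi_nonneg _))
      _ = (lam:ℝ) * (Real.exp (2*|z.1|) * phi z.1 * (Real.exp (2*|z.2|) * phi z.2)) := by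
          rw [← Real.exp_add, show |z.1| + |z.2| + (|z.1| + |z.2|) = 2*|z.1| + (2*|z.2|) by ring,
            Real.exp_add]
          ring
  have h_diff : ∀ᵐ z : ℝ × ℝ, ∀ α ∈ Metric.ball (0:ℝ) 1, HasDerivAt (F · z) (F' α z) α := by
    refine Filter.Eventually.of_forall fun z => fun α _ => ?_
    have h1 : HasDerivAt (fun a : ℝ => -a * t z) (-(t z)) α := by
      simpa using (hasDerivAt_id α).neg.mul_const (t z)
    have h2 := (h1.exp).mul_const (Cfun lam z)
    refine h2.congr_deriv ?_
    ring
  have main := hasDerivAt_integral_of_dominated_loc_of_deriv_le (Metric.ball_mem_nhds 0 one_pos) hF_meas hF_int hF'_meas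
    h_bound (integrable_bound2) h_diff
  have hg : gfun lam θ = fun α => ∫ z : ℝ × ℝ, F α z := rfl
  rw [hg]
  refine main.2.congr_deriv ?_
  -- compute ∫ z, F' 0 z
  have hxq : Integrable (fun x : ℝ => -c * ((lam:ℝ) * (x * (phi x * Phi x ^ (lam - 1))))) :=
    ((integrable_abs_q (lam - 1)).const_mul (lam:ℝ)).const_mul (-c)
  have hyq : Integrable (fun y : ℝ => -s * (y * phi y)) := by
    have hy : Integrable (fun y : ℝ => y * phi y) := by
      have h0 := integrable_abs_mul_exp_abs_mul_phi 0
      simp only [zero_mul, Real.exp_zero, mul_one] at h0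
      apply h0.mono' ((continuous_id.mul phi_continuous).aestronglyMeasurable)
      exact Filter.Eventually.of_forall fun x => by
        rw [Real.norm_eq_abs, Pi.mul_apply, abs_mul, abs_of_nonneg (phi_nonneg x)]
        simp [id]
    exact hy.const_mul _
  have int1 : Integrable (fun z : ℝ × ℝ =>
      (-c * ((lam:ℝ) * (z.1 * (phi z.1 * Phi z.1 ^ (lam - 1))))) * phi z.2) := by
    have h := hxq.mul_prod integrable_phi
    rw [← Measure.volume_eq_prod] at h
    exact h
  have int2 : Integrable (fun z : ℝ × ℝ =>
      ((lam:ℝ) * (phi z.1 * Phi z.1 ^ (lam - 1))) * (-s * (z.2 * phi z.2))) := by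
    have h := ((integrable_q (lam-1)).const_mul (lam:ℝ)).mul_prod hyq
    rw [← Measure.volume_eq_prod] at h
    exact h
  have hsplit : ∀ z : ℝ × ℝ, F' 0 z =
      (-c * ((lam:ℝ) * (z.1 * (phi z.1 * Phi z.1 ^ (lam - 1))))) * phi z.2
      + ((lam:ℝ) * (phi z.1 * Phi z.1 ^ (lam - 1))) * (-s * (z.2 * phi z.2)) := by
    intro z
    simp only [hF', ht, Cfun, neg_zero, zero_mul, Real.exp_zero]
    ring
  rw [integral_congr_ae (Filter.Eventually.of_forall hsplit),
    MeasureTheory.integral_add int1 int2]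
  rw [Measure.volume_eq_prod,
    integral_prod_mul (f := fun x => -c * ((lam:ℝ) * (x * (phi x * Phi x ^ (lam - 1)))))
      (g := phi),
    integral_prod_mul (f := fun x => (lam:ℝ) * (phi x * Phi x ^ (lam - 1)))
      (g := fun y => -s * (y * phi y)),
    integral_phi, integral_lam_q hlam]
  rw [integral_const_mul, integral_const_mul, integral_const_mul, integral_y_phi]
  ring

end Deriv

lemma gfun_lt_one {lam : ℕ} {θ : ℝ} (hlam : 2 ≤ lam) (hs : 0 < Real.sin θ)
    (hs1 : Real.sin θ ≤ 1) (hc : 0 < Real.cos θ) (hc1 : Real.cos θ ≤ 1) :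
    ∃ α₁ > (0:ℝ), ∀ α, 0 < α → α < α₁ → gfun lam θ α < 1 := by
  set D := -(Real.cos θ * ((lam:ℝ) * ∫ x, x * (phi x * Phi x ^ (lam - 1)))) with hD
  have hDneg : D < 0 := by
    rw [hD, neg_lt_zero]
    apply mul_pos hc
    apply mul_pos (by exact_mod_cast (by omega : 0 < lam)) (M_pos hlam)
  have hderiv := hasDerivAt_gfun hlam hs hs1 hc hc1
  have hslope := hasDerivAt_iff_tendsto_slope.1 hderiv
  have hev : ∀ᶠ α in 𝓝[≠] (0:ℝ), slope (gfun lam θ) 0 α < 0 :=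
    hslope.eventually_lt_const hDneg
  have hev' : ∀ᶠ α in 𝓝[>] (0:ℝ), slope (gfun lam θ) 0 α < 0 :=
    hev.filter_mono (nhdsWithin_mono 0 (fun x hx => ne_of_gt hx))
  rw [eventually_iff_exists_mem] at hev'
  obtain ⟨v, hv, hvs⟩ := hev'
  rw [mem_nhdsGT_iff_exists_Ioo_subset] at hv
  obtain ⟨u, hu, huv⟩ := hv
  refine ⟨u, hu, fun α hα0 hαu => ?_⟩
  have := hvs α (huv ⟨hα0, hαu⟩)
  rw [slope_def_field, gfun_zero lam θ hlam] at this
  have h2 : (gfun lam θ α - 1) / (α - 0) < 0 := this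
  rw [sub_zero] at h2
  rcases div_neg_iff.1 h2 with ⟨_, h⟩ | ⟨h, _⟩
  · linarith
  · linarith

section Main
variable {lam : ℕ} {θ : ℝ}

lemma pstar_nonneg (δ : ℝ) (z : ℝ × ℝ) : 0 ≤ pstar lam θ δ z := by
  unfold pstar pdelta
  have h1 : (0:ℝ) ≤ Set.indicator (Set.Ici (0:ℝ)) (fun _ => 1)
      (δ - z.1 * Real.cos θ - z.2 * Real.sin θ) :=
    Set.indicator_nonneg (fun _ _ => zero_le_one) _
  have := phi_nonneg z.1; have := phi_nonneg z.2
  have := (Phi_pos δ).le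
  have := F1_nonneg (θ := θ) δ z.1
  positivity

lemma indicator_le_one (w : ℝ) :
    Set.indicator (Set.Ici (0:ℝ)) (fun _ => (1:ℝ)) w ≤ 1 :=
  Set.indicator_apply_le' (fun _ => le_refl 1) (fun _ => zero_le_one)

lemma pstar_le (hlam : 2 ≤ lam) {δ : ℝ} (hδ : 1/2 ≤ Phi δ) (z : ℝ × ℝ) :
    pstar lam θ δ z ≤ (lam:ℝ) * 2 ^ lam * (phi z.1 * phi z.2) := by
  have hφφ : (0:ℝ) ≤ phi z.1 * phi z.2 := mul_nonneg (phi_nonneg _) (phi_nonneg _)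
  have hA : phi z.1 * phi z.2 * Set.indicator (Set.Ici (0:ℝ)) (fun _ => 1)
      (δ - z.1 * Real.cos θ - z.2 * Real.sin θ) / Phi δ ≤ phi z.1 * phi z.2 * 2 := by
    rw [div_le_iff₀ (Phi_pos δ)]
    have hind := indicator_le_one (δ - z.1 * Real.cos θ - z.2 * Real.sin θ)
    have hind0 : (0:ℝ) ≤ Set.indicator (Set.Ici (0:ℝ)) (fun _ => (1:ℝ))
        (δ - z.1 * Real.cos θ - z.2 * Real.sin θ) :=
      Set.indicator_nonneg (fun _ _ => zero_le_one) _
    nlinarith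
  have hF : F1 θ δ z.1 ^ (lam - 1) ≤ 2 ^ (lam - 1) :=
    pow_le_pow_left₀ (F1_nonneg δ z.1) (F1_le' hδ) _
  have h2 : (2:ℝ) ^ lam = 2 * 2 ^ (lam - 1) := by
    conv_lhs => rw [show lam = (lam - 1) + 1 by omega]
    rw [pow_succ]; ring
  calc pstar lam θ δ z
      ≤ (lam:ℝ) * (phi z.1 * phi z.2 * 2) * F1 θ δ z.1 ^ (lam - 1) := by
        unfold pstar pdelta
        apply mul_le_mul_of_nonneg_right _ (pow_nonneg (F1_nonneg δ z.1) _)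
        exact mul_le_mul_of_nonneg_left hA (Nat.cast_nonneg lam)
    _ ≤ (lam:ℝ) * (phi z.1 * phi z.2 * 2) * 2 ^ (lam - 1) := by
        apply mul_le_mul_of_nonneg_left hF
        positivity
    _ = (lam:ℝ) * 2 ^ lam * (phi z.1 * phi z.2) := by
        rw [h2]; ring

end Main

section Tendsto
variable {lam : ℕ} {θ : ℝ}

lemma pstar_aesm (δ : ℝ) :
    AEStronglyMeasurable (fun z : ℝ × ℝ => pstar lam θ δ z) (volume : Measure (ℝ × ℝ)) := by
  unfold pstar pdelta
  have hind : Measurable fun z : ℝ × ℝ => Set.indicator (Set.Ici (0:ℝ)) (fun _ => (1:ℝ))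
      (δ - z.1 * Real.cos θ - z.2 * Real.sin θ) := by
    have h1 : Measurable (Set.indicator (Set.Ici (0:ℝ)) (fun _ => (1:ℝ))) :=
      measurable_const.indicator measurableSet_Ici
    have h2 : Measurable fun z : ℝ × ℝ => δ - z.1 * Real.cos θ - z.2 * Real.sin θ := by
      fun_prop
    exact h1.comp h2
  have hF1 : Measurable fun z : ℝ × ℝ => F1 θ δ z.1 ^ (lam - 1) :=
    ((F1_mono δ).measurable.comp measurable_fst).pow_const _
  apply Measurable.aestronglyMeasurable
  apply Measurable.mul _ hF1
  apply Measurable.const_mul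
  apply Measurable.div _ measurable_const
  exact ((phi_continuous.measurable.comp measurable_fst).mul
    (phi_continuous.measurable.comp measurable_snd)).mul hind

lemma pstar_tendsto (hs : 0 < Real.sin θ) (z : ℝ × ℝ) :
    Tendsto (fun δ => pstar lam θ δ z) atTop (𝓝 (Cfun lam z)) := by
  have hind : Tendsto (fun δ => Set.indicator (Set.Ici (0:ℝ)) (fun _ => (1:ℝ))
      (δ - z.1 * Real.cos θ - z.2 * Real.sin θ)) atTop (𝓝 1) := by
    apply Tendsto.congr' _ tendsto_const_nhds
    filter_upwards [eventually_ge_atTop (z.1 * Real.cos θ + z.2 * Real.sin θ)] with δ hδ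
    rw [Set.indicator_of_mem]
    rw [Set.mem_Ici]
    linarith
  have hF1 : Tendsto (fun δ => F1 θ δ z.1 ^ (lam - 1)) atTop (𝓝 (Phi z.1 ^ (lam - 1))) :=
    (F1_tendsto hs z.1).pow _
  have hΦ : Tendsto (fun δ => Phi δ) atTop (𝓝 1) := Phi_tendsto_one
  have hpd : Tendsto (fun δ => pdelta θ δ z) atTop (𝓝 (phi z.1 * phi z.2)) := by
    unfold pdelta
    have hnum : Tendsto (fun δ => phi z.1 * phi z.2 * Set.indicator (Set.Ici (0:ℝ))
        (fun _ => (1:ℝ)) (δ - z.1 * Real.cos θ - z.2 * Real.sin θ)) atTop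
        (𝓝 (phi z.1 * phi z.2 * 1)) := hind.const_mul _
    have := hnum.div hΦ one_ne_zero
    rw [mul_one, div_one] at this; exact this
  have := (hpd.const_mul (lam:ℝ)).mul hF1
  unfold pstar Cfun
  convert this using 2
  ring

lemma tendsto_main (hlam : 2 ≤ lam) (hs : 0 < Real.sin θ) (hc : 0 < Real.cos θ)
    {α : ℝ} (hα0 : 0 < α) (hα1 : α ≤ 1) :
    Tendsto (fun δ => ∫ z : ℝ × ℝ,
        Real.exp (-α * (z.1 * Real.cos θ + z.2 * Real.sin θ)) * pstar lam θ δ z)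
      atTop (𝓝 (gfun lam θ α)) := by
  unfold gfun
  apply tendsto_integral_filter_of_dominated_convergence
    (fun z : ℝ × ℝ => (lam:ℝ) * 2 ^ lam * (Real.exp (1*|z.1|) * phi z.1 * (Real.exp (1*|z.2|) * phi z.2)))
  · refine Filter.Eventually.of_forall fun δ => ?_
    apply AEStronglyMeasurable.mul _ (pstar_aesm δ)
    exact (Real.continuous_exp.comp (by fun_prop)).aestronglyMeasurable
  · have hev : ∀ᶠ δ in atTop, 1/2 ≤ Phi δ :=
      Phi_tendsto_one.eventually_const_le (by norm_num)
    filter_upwards [hev] with δ hδ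
    refine Filter.Eventually.of_forall fun z => ?_
    have hexp : Real.exp (-α * (z.1 * Real.cos θ + z.2 * Real.sin θ))
        ≤ Real.exp (1*|z.1|) * Real.exp (1*|z.2|) := by
      rw [← Real.exp_add]
      apply Real.exp_le_exp.2
      have hc1 : Real.cos θ ≤ 1 := Real.cos_le_one θ
      have hs1 : Real.sin θ ≤ 1 := Real.sin_le_one θ
      have ha : -z.1 * Real.cos θ ≤ |z.1| * Real.cos θ := by
        apply mul_le_mul_of_nonneg_right _ hc.le
        linarith [neg_abs_le z.1]
      have hb : -z.2 * Real.sin θ ≤ |z.2| * Real.sin θ := by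
        apply mul_le_mul_of_nonneg_right _ hs.le
        linarith [neg_abs_le z.2]
      have h1 : -α * (z.1 * Real.cos θ + z.2 * Real.sin θ)
          ≤ α * (|z.1| * Real.cos θ + |z.2| * Real.sin θ) := by
        rw [show -α * (z.1 * Real.cos θ + z.2 * Real.sin θ)
          = α * (-z.1 * Real.cos θ + -z.2 * Real.sin θ) by ring]
        apply mul_le_mul_of_nonneg_left _ hα0.le
        linarith
      have h2 : α * (|z.1| * Real.cos θ + |z.2| * Real.sin θ) ≤ |z.1| + |z.2| := by
        have h3 : |z.1| * Real.cos θ ≤ |z.1| :=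
          mul_le_of_le_one_right (abs_nonneg _) hc1
        have h4 : |z.2| * Real.sin θ ≤ |z.2| :=
          mul_le_of_le_one_right (abs_nonneg _) hs1
        have h5 : α * (|z.1| * Real.cos θ + |z.2| * Real.sin θ)
            ≤ 1 * (|z.1| * Real.cos θ + |z.2| * Real.sin θ) := by
          apply mul_le_mul_of_nonneg_right hα1
          positivity
        nlinarith
      linarith
    rw [Real.norm_eq_abs, abs_of_nonneg (mul_nonneg (Real.exp_pos _).le (pstar_nonneg δ z))]
    calc Real.exp (-α * (z.1 * Real.cos θ + z.2 * Real.sin θ)) * pstar lam θ δ z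
        ≤ (Real.exp (1*|z.1|) * Real.exp (1*|z.2|)) * ((lam:ℝ) * 2 ^ lam * (phi z.1 * phi z.2)) :=
          mul_le_mul hexp (pstar_le hlam hδ z) (pstar_nonneg δ z) (by positivity)
      _ = (lam:ℝ) * 2 ^ lam * (Real.exp (1*|z.1|) * phi z.1 * (Real.exp (1*|z.2|) * phi z.2)) := by
          ring
  · have h1 : Integrable (fun x : ℝ => Real.exp (1*|x|) * phi x) := integrable_exp_abs_mul_phi 1
    have h := (h1.mul_prod h1).const_mul ((lam:ℝ) * 2 ^ lam)
    rw [← Measure.volume_eq_prod] at h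
    exact h
  · refine Filter.Eventually.of_forall fun z => ?_
    exact (pstar_tendsto hs z).const_mul _

end Tendsto

/-- geometric drift: for sufficiently small α > 0,
limsup_{δ→∞} E[exp(−α (X_δ cos θ + Y_δ sin θ))] < 1. -/
theorem stmt15 (lam : ℕ) (hlam : 2 ≤ lam) (θ : ℝ)
    (hθ : θ ∈ Set.Ioo 0 (Real.pi/2)) :
    ∃ α₀ > (0:ℝ), ∀ α : ℝ, 0 < α → α < α₀ →
      Filter.limsup
        (fun δ => ∫ z : ℝ × ℝ,
          Real.exp (-α * (z.1 * Real.cos θ + z.2 * Real.sin θ)) * pstar lam θ δ z)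
        Filter.atTop < 1 := by
  obtain ⟨hθ0, hθ2⟩ := hθ
  have hs : 0 < Real.sin θ :=
    Real.sin_pos_of_pos_of_lt_pi hθ0 (lt_trans hθ2 (by linarith [Real.pi_pos]))
  have hc : 0 < Real.cos θ := Real.cos_pos_of_mem_Ioo ⟨by linarith [Real.pi_pos], hθ2⟩
  obtain ⟨α₁, hα₁pos, hα₁⟩ := gfun_lt_one hlam hs (Real.sin_le_one θ) hc (Real.cos_le_one θ)
  refine ⟨min α₁ 1, lt_min hα₁pos one_pos, fun α hα0 hαlt => ?_⟩
  have hle1 : α ≤ 1 := le_of_lt (lt_of_lt_of_le hαlt (min_le_right _ _))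
  have hlt1 : α < α₁ := lt_of_lt_of_le hαlt (min_le_left _ _)
  have ht := tendsto_main hlam hs hc hα0 hle1
  rw [ht.limsup_eq]
  exact hα₁ α hα0 hlt1
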